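/- Let T > 0, M ≥ 0, R > 0. Let n : [0,T] × ℝ → [0,∞) be continuously differentiable with n(t,x) = 0 whenever |x| ≥ R; let W : [0,T] × ℝ → ℝ be such that ∂_x W and ∂_x² W exist and are continuous on [0,T] × ℝ; and let g : [0,T] × ℝ → ℝ be continuous with g ≤ M. If ∂_t n = (∂_x n)(∂_x W) + n ∂_x² W + n g on [0,T] × ℝ, then for every t ∈ [0,T]: ∫_ℝ n(t,x) dx ≤ e^{M t} ∫_ℝ n(0,x) dx. -/

import Mathlib

open MeasureTheory Set

/-- conditional mass estimate for classical solutions of the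
transport–growth equation `∂_t n = (∂_x n)(∂_x W) + n ∂_x² W + n g` on `[0,T] × ℝ`,
with `n ≥ 0` compactly supported in space and growth term `g ≤ M`:
`∫ n(t) dx ≤ e^{Mt} ∫ n(0) dx` for all `t ∈ [0,T]`. -/
theorem mass_growth_estimate (T M R : ℝ) (hT : 0 < T) (hM : 0 ≤ M) (hR : 0 < R)
    (n W g : ℝ → ℝ → ℝ)
    (hn : ContDiffOn ℝ 1 (Function.uncurry n) (Icc 0 T ×ˢ (univ : Set ℝ)))
    (hnpos : ∀ t ∈ Icc (0 : ℝ) T, ∀ x : ℝ, 0 ≤ n t x)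
    (hnsupp : ∀ t ∈ Icc (0 : ℝ) T, ∀ x : ℝ, R ≤ |x| → n t x = 0)
    (hWx : ∀ t ∈ Icc (0 : ℝ) T, ∀ x : ℝ, DifferentiableAt ℝ (W t) x)
    (hWxx : ∀ t ∈ Icc (0 : ℝ) T, ∀ x : ℝ, DifferentiableAt ℝ (deriv (W t)) x)
    (hWxcont : ContinuousOn (fun q : ℝ × ℝ => deriv (W q.1) q.2)
      (Icc 0 T ×ˢ (univ : Set ℝ)))
    (hWxxcont : ContinuousOn (fun q : ℝ × ℝ => deriv (deriv (W q.1)) q.2)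
      (Icc 0 T ×ˢ (univ : Set ℝ)))
    (hgcont : ContinuousOn (Function.uncurry g) (Icc 0 T ×ˢ (univ : Set ℝ)))
    (hgM : ∀ t ∈ Icc (0 : ℝ) T, ∀ x : ℝ, g t x ≤ M)
    (hpde : ∀ t ∈ Icc (0 : ℝ) T, ∀ x : ℝ,
      derivWithin (fun s : ℝ => n s x) (Icc 0 T) t
        = deriv (n t) x * deriv (W t) x + n t x * deriv (deriv (W t)) x + n t x * g t x) :
    ∀ t ∈ Icc (0 : ℝ) T, (∫ x : ℝ, n t x) ≤ Real.exp (M * t) * ∫ x : ℝ, n 0 x := by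
  set S : Set (ℝ × ℝ) := Icc 0 T ×ˢ (univ : Set ℝ) with hSdef
  have hSuniq : UniqueDiffOn ℝ S := (uniqueDiffOn_Icc hT).prod uniqueDiffOn_univ
  have hTuniq : UniqueDiffOn ℝ (Icc (0:ℝ) T) := uniqueDiffOn_Icc hT
  set dn : ℝ → ℝ → ℝ := fun t x => fderivWithin ℝ (Function.uncurry n) S (t, x) (1, 0) with hdndef
  set dxn : ℝ → ℝ → ℝ := fun t x => fderivWithin ℝ (Function.uncurry n) S (t, x) (0, 1) with hdxndef
  -- membership helper
  have hmemS : ∀ t ∈ Icc (0:ℝ) T, ∀ x : ℝ, (t, x) ∈ S := by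
    intro t ht x; exact ⟨ht, mem_univ x⟩
  -- partial derivative in t
  have hDt : ∀ t ∈ Icc (0:ℝ) T, ∀ x : ℝ,
      HasDerivWithinAt (fun s : ℝ => n s x) (dn t x) (Icc 0 T) t := by
    intro t ht x
    have hD := (hn.differentiableOn one_ne_zero (t, x) (hmemS t ht x)).hasFDerivWithinAt
    have hφ : HasDerivWithinAt (fun s : ℝ => ((s, x) : ℝ × ℝ)) ((1 : ℝ), (0 : ℝ)) (Icc 0 T) t :=
      ((hasDerivAt_id t).prodMk (hasDerivAt_const t x)).hasDerivWithinAt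
    have hmaps : Set.MapsTo (fun s : ℝ => ((s, x) : ℝ × ℝ)) (Icc 0 T) S := fun s hs => hmemS s hs x
    exact hD.comp_hasDerivWithinAt t hφ hmaps
  have hDtval : ∀ t ∈ Icc (0:ℝ) T, ∀ x : ℝ,
      derivWithin (fun s : ℝ => n s x) (Icc 0 T) t = dn t x := by
    intro t ht x; exact (hDt t ht x).derivWithin (hTuniq t ht)
  -- partial derivative in x
  have hDx : ∀ t ∈ Icc (0:ℝ) T, ∀ x : ℝ, HasDerivAt (n t) (dxn t x) x := by
    intro t ht x
    have hD := (hn.differentiableOn one_ne_zero (t, x) (hmemS t ht x)).hasFDerivWithinAt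
    have hφ : HasDerivWithinAt (fun y : ℝ => ((t, y) : ℝ × ℝ)) ((0 : ℝ), (1 : ℝ)) univ x :=
      ((hasDerivAt_const x t).prodMk (hasDerivAt_id x)).hasDerivWithinAt
    have hmaps : Set.MapsTo (fun y : ℝ => ((t, y) : ℝ × ℝ)) univ S := fun y _ => hmemS t ht y
    have := hD.comp_hasDerivWithinAt x hφ hmaps
    rw [hasDerivWithinAt_univ] at this
    exact this
  have hDxval : ∀ t ∈ Icc (0:ℝ) T, ∀ x : ℝ, deriv (n t) x = dxn t x := by
    intro t ht x; exact (hDx t ht x).deriv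
  -- continuity of the partial derivatives
  have hfd : ContinuousOn (fun q : ℝ × ℝ => fderivWithin ℝ (Function.uncurry n) S q) S :=
    hn.continuousOn_fderivWithin hSuniq le_rfl
  have hdncont : ContinuousOn (fun q : ℝ × ℝ => dn q.1 q.2) S := by
    have := hfd.clm_apply (continuousOn_const (c := ((1:ℝ), (0:ℝ))))
    simpa [hdndef] using this
  have hdxncont : ContinuousOn (fun q : ℝ × ℝ => dxn q.1 q.2) S := by
    have := hfd.clm_apply (continuousOn_const (c := ((0:ℝ), (1:ℝ))))
    simpa [hdxndef] using this
  have hncont : ContinuousOn (Function.uncurry n) S := hn.continuousOn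
  -- slice continuity in x (t fixed)
  have hslice : ∀ (f : ℝ × ℝ → ℝ), ContinuousOn f S → ∀ t ∈ Icc (0:ℝ) T,
      Continuous (fun x : ℝ => f (t, x)) := by
    intro f hf t ht
    exact hf.comp_continuous (continuous_const.prodMk continuous_id) (fun x => hmemS t ht x)
  -- slice continuity in t (x fixed)
  have hsliceT : ∀ (f : ℝ × ℝ → ℝ), ContinuousOn f S → ∀ x : ℝ,
      ContinuousOn (fun t : ℝ => f (t, x)) (Icc 0 T) := by
    intro f hf x
    exact hf.comp (Continuous.continuousOn (continuous_id.prodMk continuous_const))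
      (fun s hs => hmemS s hs x)
  set IR : Set ℝ := Icc (-R) R with hIRdef
  have hRR : -R ≤ R := by linarith
  have hT0 : (0:ℝ) ∈ Icc (0:ℝ) T := ⟨le_refl 0, hT.le⟩
  set F : ℝ → ℝ := fun t => ∫ x in IR, n t x with hFdef
  set Φ : ℝ → ℝ := fun s => ∫ x in IR, dn s x with hΦdef
  -- FTC in time for each x
  have hFTCt : ∀ t ∈ Icc (0:ℝ) T, ∀ x : ℝ,
      ∫ s in (0:ℝ)..t, dn s x = n t x - n 0 x := by
    intro t ht x
    have hcont : ContinuousOn (fun s : ℝ => n s x) (Icc 0 t) :=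
      (hsliceT (Function.uncurry n) hncont x).mono (Icc_subset_Icc le_rfl ht.2)
    have hderiv : ∀ s ∈ Ioo (0:ℝ) t, HasDerivWithinAt (fun s : ℝ => n s x) (dn s x) (Ioi s) s := by
      intro s hs
      have hsmem : s ∈ Icc (0:ℝ) T := ⟨hs.1.le, hs.2.le.trans ht.2⟩
      have hnhds : Icc (0:ℝ) T ∈ nhds s :=
        Icc_mem_nhds hs.1 (lt_of_lt_of_le hs.2 ht.2)
      exact (((hDt s hsmem x).hasDerivAt hnhds).hasDerivWithinAt)
    have hint : IntervalIntegrable (fun s => dn s x) volume 0 t := by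
      apply ContinuousOn.intervalIntegrable
      rw [uIcc_of_le ht.1]
      exact (hsliceT _ hdncont x).mono (Icc_subset_Icc le_rfl ht.2)
    exact intervalIntegral.integral_eq_sub_of_hasDeriv_right_of_le ht.1 hcont hderiv hint
  -- Fubini: F t = F 0 + ∫_0^t Φ
  have hFub : ∀ t ∈ Icc (0:ℝ) T, F t = F 0 + ∫ s in (0:ℝ)..t, Φ s := by
    intro t ht
    have hintn : ∀ u ∈ Icc (0:ℝ) T, IntegrableOn (fun x => n u x) IR := by
      intro u hu
      exact ((hslice _ hncont u hu).continuousOn).integrableOn_compact isCompact_Icc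
    have key : ∫ x in IR, (n t x - n 0 x) = ∫ s in (0:ℝ)..t, Φ s := by
      have h1 : ∀ x ∈ IR, n t x - n 0 x = ∫ s in Icc (0:ℝ) t, dn s x := by
        intro x _
        rw [← hFTCt t ht x, intervalIntegral.integral_of_le ht.1,
          integral_Icc_eq_integral_Ioc]
      rw [setIntegral_congr_fun measurableSet_Icc h1]
      have hswap : ∫ x in IR, ∫ s in Icc (0:ℝ) t, dn s x
          = ∫ s in Icc (0:ℝ) t, ∫ x in IR, dn s x := by
        apply MeasureTheory.integral_integral_swap
        rw [Measure.prod_restrict]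
        apply ContinuousOn.integrableOn_compact (isCompact_Icc.prod isCompact_Icc)
        have : ContinuousOn (fun q : ℝ × ℝ => dn q.1 q.2) (Icc (0:ℝ) t ×ˢ IR) :=
          hdncont.mono (fun q hq => hmemS q.1 (Icc_subset_Icc le_rfl ht.2 hq.1) q.2)
        exact this.comp continuous_swap.continuousOn
          (fun q hq => by exact ⟨hq.2, hq.1⟩)
      rw [hswap, intervalIntegral.integral_of_le ht.1, ← integral_Icc_eq_integral_Ioc]
    have := integral_sub (hintn t ht) (hintn 0 hT0)
    rw [this] at key
    simp only [hFdef]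
    linarith [key]
  -- continuity of Φ on [0,T]
  have hΦcont : ContinuousOn Φ (Icc 0 T) := by
    obtain ⟨C, hC⟩ : ∃ C, ∀ q ∈ Icc (0:ℝ) T ×ˢ IR, ‖dn q.1 q.2‖ ≤ C := by
      rcases (isCompact_Icc.prod isCompact_Icc).exists_bound_of_continuousOn
        (hdncont.mono (fun q hq => hmemS q.1 hq.1 q.2)) with ⟨C, hC⟩
      exact ⟨C, hC⟩
    apply continuousOn_of_dominated (bound := fun _ => C)
    · intro s hs
      exact (((hslice _ hdncont s hs).continuousOn).integrableOn_compact
        isCompact_Icc).aestronglyMeasurable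
    · intro s hs
      filter_upwards [ae_restrict_mem measurableSet_Icc] with x hx
      exact hC (s, x) ⟨hs, hx⟩
    · exact integrable_const C
    · filter_upwards [ae_restrict_mem measurableSet_Icc] with x _
      exact hsliceT _ hdncont x
  -- clamped primitive
  set proj : ℝ → ℝ := fun t => max 0 (min t T) with hprojdef
  have hprojmem : ∀ t : ℝ, proj t ∈ Icc (0:ℝ) T := by
    intro t
    constructor
    · exact le_max_left _ _
    · exact max_le hT.le (min_le_right _ _)
  have hprojeq : ∀ t ∈ Icc (0:ℝ) T, proj t = t := by
    intro t ht
    simp only [hprojdef]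
    rw [min_eq_left ht.2, max_eq_right ht.1]
  set Ψ : ℝ → ℝ := fun t => Φ (proj t) with hΨdef
  have hΨcont : Continuous Ψ := by
    apply hΦcont.comp_continuous
    · exact continuous_const.max (continuous_id.min continuous_const)
    · exact hprojmem
  set G : ℝ → ℝ := fun t => F 0 + ∫ s in (0:ℝ)..t, Ψ s with hGdef
  have hGderiv : ∀ t : ℝ, HasDerivAt G (Ψ t) t := by
    intro t
    have h1 : HasDerivAt (fun u => ∫ s in (0:ℝ)..u, Ψ s) (Ψ t) t :=
      intervalIntegral.integral_hasDerivAt_right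
        (hΨcont.intervalIntegrable 0 t)
        (hΨcont.stronglyMeasurable.stronglyMeasurableAtFilter)
        hΨcont.continuousAt
    simpa [hGdef] using h1.const_add (F 0)
  have hGF : ∀ t ∈ Icc (0:ℝ) T, G t = F t := by
    intro t ht
    have : ∫ s in (0:ℝ)..t, Ψ s = ∫ s in (0:ℝ)..t, Φ s := by
      apply intervalIntegral.integral_congr
      intro s hs
      rw [uIcc_of_le ht.1] at hs
      exact congrArg Φ (hprojeq s ⟨hs.1, hs.2.trans ht.2⟩)
    rw [hGdef]
    simp only
    rw [this, ← hFub t ht]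
  -- nonnegativity of F
  have hFpos : ∀ s ∈ Icc (0:ℝ) T, 0 ≤ F s := by
    intro s hs
    exact setIntegral_nonneg measurableSet_Icc (fun x _ => hnpos s hs x)
  -- the key differential inequality: Φ s ≤ M * F s
  have hkey : ∀ s ∈ Icc (0:ℝ) T, Φ s ≤ M * F s := by
    intro s hs
    -- flux term and its derivative
    set P : ℝ → ℝ := fun x => n s x * deriv (W s) x with hPdef
    set P' : ℝ → ℝ := fun x => dxn s x * deriv (W s) x + n s x * deriv (deriv (W s)) x
      with hP'def
    have hPderiv : ∀ x : ℝ, HasDerivAt P (P' x) x := by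
      intro x
      exact (hDx s hs x).mul ((hWxx s hs x).hasDerivAt)
    have hP'cont : Continuous P' := by
      apply Continuous.add
      · exact (hslice _ hdxncont s hs).mul (hslice _ hWxcont s hs)
      · exact (hslice _ hncont s hs).mul (hslice _ hWxxcont s hs)
    have hflux : ∫ x in IR, P' x = 0 := by
      have h1 : ∫ x in (-R)..R, P' x = P R - P (-R) :=
        intervalIntegral.integral_eq_sub_of_hasDerivAt
          (fun x _ => hPderiv x) (hP'cont.intervalIntegrable _ _)
      have hnR : n s R = 0 := hnsupp s hs R (by rw [abs_of_pos hR])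
      have hnR' : n s (-R) = 0 := hnsupp s hs (-R) (by rw [abs_neg, abs_of_pos hR])
      rw [intervalIntegral.integral_of_le hRR, ← integral_Icc_eq_integral_Ioc] at h1
      rw [h1, hPdef]
      simp [hnR, hnR']
    -- decomposition of dn
    have hdecomp : ∀ x : ℝ, dn s x = P' x + n s x * g s x := by
      intro x
      have := hpde s hs x
      rw [hDtval s hs x, hDxval s hs x] at this
      rw [this]
    have hintP' : IntegrableOn P' IR := hP'cont.continuousOn.integrableOn_compact isCompact_Icc
    have hintng : IntegrableOn (fun x => n s x * g s x) IR := by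
      apply ContinuousOn.integrableOn_compact isCompact_Icc
      exact ((hslice _ hncont s hs).mul (hslice _ hgcont s hs)).continuousOn
    have hintn : IntegrableOn (fun x => M * n s x) IR := by
      apply ContinuousOn.integrableOn_compact isCompact_Icc
      exact (continuous_const.mul (hslice _ hncont s hs)).continuousOn
    have hsplit : Φ s = (∫ x in IR, P' x) + ∫ x in IR, n s x * g s x := by
      rw [hΦdef]
      simp only
      rw [← integral_add hintP' hintng]
      apply setIntegral_congr_fun measurableSet_Icc
      intro x _
      exact hdecomp x
    rw [hsplit, hflux, zero_add]
    calc ∫ x in IR, n s x * g s x ≤ ∫ x in IR, M * n s x := by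
          apply setIntegral_mono_on hintng hintn measurableSet_Icc
          intro x _
          calc n s x * g s x ≤ n s x * M := mul_le_mul_of_nonneg_left (hgM s hs x) (hnpos s hs x)
            _ = M * n s x := mul_comm _ _
      _ = M * F s := by rw [integral_const_mul]
  -- Gronwall via monotonicity of exp(-Mt) * G t
  set h : ℝ → ℝ := fun t => Real.exp (-M * t) * G t with hhdef
  have hhd : ∀ t : ℝ, HasDerivAt h
      (Real.exp (-M * t) * (-M) * G t + Real.exp (-M * t) * Ψ t) t := by
    intro t
    have hexp : HasDerivAt (fun t : ℝ => Real.exp (-M * t)) (Real.exp (-M * t) * (-M)) t := by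
      have := ((hasDerivAt_id t).const_mul (-M)).exp
      simpa using this
    have := hexp.mul (hGderiv t)
    exact this
  have hanti : AntitoneOn h (Icc 0 T) := by
    apply antitoneOn_of_deriv_nonpos (convex_Icc 0 T)
    · apply Continuous.continuousOn
      apply Continuous.mul
      · exact Real.continuous_exp.comp (continuous_const.mul continuous_id)
      · exact continuous_iff_continuousAt.2 (fun t => (hGderiv t).continuousAt)
    · intro t _
      exact (hhd t).differentiableAt.differentiableWithinAt
    · intro t ht
      rw [interior_Icc] at ht
      have htmem : t ∈ Icc (0:ℝ) T := ⟨ht.1.le, ht.2.le⟩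
      rw [(hhd t).deriv]
      have h1 : Ψ t = Φ t := congrArg Φ (hprojeq t htmem)
      have h2 : Φ t ≤ M * F t := hkey t htmem
      have h3 : G t = F t := hGF t htmem
      have hep : 0 < Real.exp (-M * t) := Real.exp_pos _
      rw [h1, h3]
      nlinarith [h2, hep]
  -- conclude
  intro t ht
  have hint : ∀ u ∈ Icc (0:ℝ) T, (∫ x : ℝ, n u x) = F u := by
    intro u hu
    rw [hFdef]
    simp only
    symm
    apply setIntegral_eq_integral_of_forall_compl_eq_zero
    intro x hx
    apply hnsupp u hu x
    by_contra hcon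
    push_neg at hcon
    exact hx ⟨(abs_lt.mp hcon).1.le, (abs_lt.mp hcon).2.le⟩
  rw [hint t ht, hint 0 hT0]
  have h1 : h t ≤ h 0 := hanti hT0 ht ht.1
  have h2 : h 0 = F 0 := by
    simp [hhdef, hGdef]
  have h3 : h t = Real.exp (-M * t) * F t := by
    rw [hhdef]
    simp only
    rw [hGF t ht]
  rw [h2, h3] at h1
  have hep : 0 < Real.exp (-M * t) := Real.exp_pos _
  have := mul_le_mul_of_nonneg_left h1 (le_of_lt (Real.exp_pos (M * t)))
  rw [← mul_assoc, ← Real.exp_add] at this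
  simpa using this
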